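/- arXiv:math/9804153 — 2 statements merged into one kernel-verified Lean document; each statement's English description precedes it below -/
import Mathlib

section
/- If (x_γ)_{γ∈Lim(ω₁)} is a ♣_w-sequence, then the family X = { x_γ \ u : γ ∈ Lim(ω₁), u a finite subset of ω₁ } is a 𝔰𝔱-set of cardinality ℵ₁; in particular ♣_w implies 𝔰𝔱 = ℵ₁. -/
open Cardinal Set

/-- The first uncountable ordinal. -/
noncomputable def ω₁ : Ordinal := (aleph 1).ord

/-- The set of limit ordinals below `ω₁`. -/
def LimOmega1 : Set Ordinal := {γ | γ < ω₁ ∧ Order.IsSuccLimit γ}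

/-- `C` is a club (closed unbounded) subset of `ω₁`. -/
def IsClubIn (C : Set Ordinal) : Prop :=
  C ⊆ Iio ω₁ ∧
    (∀ δ, δ < ω₁ → δ ≠ 0 → (∀ α < δ, ∃ β ∈ C, α < β ∧ β < δ) → δ ∈ C) ∧
    (∀ α < ω₁, ∃ β ∈ C, α < β)

/-- `S` is a stationary subset of `ω₁`: it meets every club subset of `ω₁`. -/
def IsStatIn (S : Set Ordinal) : Prop :=
  S ⊆ Iio ω₁ ∧ ∀ C, IsClubIn C → (S ∩ C).Nonempty

/-- The set of ordinals `s` has order type `ω`. -/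
def HasOtpOmega (s : Set Ordinal) : Prop :=
  Ordinal.type (Subrel ((· < ·) : Ordinal → Ordinal → Prop) (· ∈ s)) = Ordinal.omega0

/-- `x γ` is a cofinal subset of `γ` of order type `ω`. -/
def IsLadderAt (γ : Ordinal) (s : Set Ordinal) : Prop :=
  s ⊆ Iio γ ∧ (∀ α < γ, ∃ β ∈ s, α ≤ β) ∧ HasOtpOmega s

/-- `(x γ)_{γ ∈ Lim(ω₁)}` is a `♣_w`-sequence. -/
def ClubWSeq (x : Ordinal → Set Ordinal) : Prop :=
  (∀ γ ∈ LimOmega1, IsLadderAt γ (x γ)) ∧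
    ∀ y : Set Ordinal, y ⊆ Iio ω₁ → #y = aleph 1 →
      ∃ γ ∈ LimOmega1, (x γ \ y).Finite

/-- `X` is a `𝔰𝔱`-set: a family of countably infinite subsets of `ω₁` such that each
subset of `ω₁` of cardinality `ℵ₁` contains a member of `X`. -/
def IsStickFam (X : Set (Set Ordinal)) : Prop :=
  (∀ s ∈ X, s ⊆ Iio ω₁ ∧ #s = ℵ₀) ∧
    ∀ y : Set Ordinal, y ⊆ Iio ω₁ → #y = aleph 1 → ∃ s ∈ X, s ⊆ y

/-- The cardinal `𝔰𝔱`: the least cardinality of a `𝔰𝔱`-set. -/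
noncomputable def stick : Cardinal :=
  sInf {c | ∃ X : Set (Set Ordinal), IsStickFam X ∧ #X = c}

/- ### Auxiliary lemmas -/

lemma mk_Iio_omega1 : #(Iio ω₁ : Set Ordinal) = aleph 1 := by
  rw [ω₁, Ordinal.mk_Iio_ordinal, Cardinal.card_ord, Cardinal.lift_aleph]
  simp

lemma mk_of_hasOtpOmega {s : Set Ordinal} (h : HasOtpOmega s) : #s = ℵ₀ := by
  have := congrArg Ordinal.card h
  rwa [Ordinal.card_type, Ordinal.card_omega0] at this

lemma infinite_of_hasOtpOmega {s : Set Ordinal} (h : HasOtpOmega s) : s.Infinite := by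
  rw [← Set.infinite_coe_iff, Cardinal.infinite_iff, mk_of_hasOtpOmega h]

/-- Any stick family has cardinality at least `ℵ₁`. -/
lemma stickFam_lower {X : Set (Set Ordinal)} (hX : IsStickFam X) : aleph 1 ≤ #X := by
  by_contra h
  push_neg at h
  have hXc : X.Countable := (Cardinal.countable_iff_lt_aleph_one X).2 h
  have hUc : (⋃₀ X).Countable := by
    refine hXc.sUnion (fun t ht => ?_)
    rw [Cardinal.countable_iff_lt_aleph_one, (hX.1 t ht).2]
    exact Cardinal.aleph0_lt_aleph_one
  set T : Set Ordinal := Iio ω₁ ∩ ⋃₀ X with hT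
  have hTc : T.Countable := hUc.mono Set.inter_subset_right
  have hsum : #(Iio ω₁ \ T : Set Ordinal) + #T = aleph 1 := by
    rw [Cardinal.mk_diff_add_mk Set.inter_subset_left, mk_Iio_omega1]
  have hy : #(Iio ω₁ \ T : Set Ordinal) = aleph 1 := by
    rcases lt_or_ge #(Iio ω₁ \ T : Set Ordinal) (aleph 1) with hlt | hle
    · exfalso
      have : #(Iio ω₁ \ T : Set Ordinal) + #T < aleph 1 :=
        Cardinal.add_lt_of_lt (Cardinal.aleph0_le_aleph 1) hlt
          ((Cardinal.countable_iff_lt_aleph_one T).1 hTc)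
      exact absurd hsum this.ne
    · refine le_antisymm ?_ hle
      rw [← mk_Iio_omega1]
      exact Cardinal.mk_le_mk_of_subset Set.diff_subset
  obtain ⟨s, hsX, hsy⟩ := hX.2 (Iio ω₁ \ T) Set.diff_subset hy
  have hsne : s.Nonempty := by
    rw [← Set.nonempty_coe_sort, ← Cardinal.mk_ne_zero_iff, (hX.1 s hsX).2]
    exact Cardinal.aleph0_ne_zero
  obtain ⟨a, ha⟩ := hsne
  have h1 : a ∈ Iio ω₁ \ T := hsy ha
  exact h1.2 ⟨(hX.1 s hsX).1 ha, s, hsX, ha⟩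


universe u v

lemma lift_omega1' : Ordinal.lift.{v, u} ω₁.{u} = Ordinal.lift.{u, v} ω₁.{v} := by
  simp only [ω₁, Cardinal.lift_ord, Cardinal.lift_aleph, Ordinal.lift_one]

/-- Transfer of countable ordinals across universes. -/
noncomputable def obal : Ordinal.{u} → Ordinal.{v} := fun α =>
  if h : Ordinal.lift.{v} α < Ordinal.lift.{u} ω₁.{v} then
    Classical.choose (Set.mem_range.mp (Ordinal.mem_range_lift_of_le h.le))
  else 0

lemma obal_cond {α : Ordinal.{u}} (h : α < ω₁.{u}) :
    Ordinal.lift.{v} α < Ordinal.lift.{u} ω₁.{v} := by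
  rw [← lift_omega1']
  exact Ordinal.lift_lt.2 h

lemma obal_lift {α : Ordinal.{u}} (h : α < ω₁.{u}) :
    Ordinal.lift.{u} (obal.{u, v} α) = Ordinal.lift.{v} α := by
  simp only [obal, dif_pos (obal_cond h)]
  exact Classical.choose_spec (Set.mem_range.mp (Ordinal.mem_range_lift_of_le (obal_cond h).le))

lemma obal_lt {α : Ordinal.{u}} (h : α < ω₁.{u}) : obal.{u, v} α < ω₁.{v} := by
  have h1 : Ordinal.lift.{u} (obal.{u, v} α) < Ordinal.lift.{u} ω₁.{v} := by
    rw [obal_lift h]; exact obal_cond h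
  exact Ordinal.lift_lt.1 h1

lemma obal_obal {α : Ordinal.{u}} (h : α < ω₁.{u}) : obal.{v, u} (obal.{u, v} α) = α := by
  have h1 : Ordinal.lift.{v} (obal.{v, u} (obal.{u, v} α)) = Ordinal.lift.{v} α := by
    rw [obal_lift (obal_lt h), obal_lift h]
  exact Ordinal.lift_inj.1 h1

lemma lift_aleph_one : Cardinal.lift.{v} (aleph.{u} 1) = aleph 1 := by
  rw [Cardinal.lift_aleph, Ordinal.lift_one]

/-- Transfer a stick family across universes, computing `stick`. -/
lemma stick_eq_aleph_one_of {X : Set (Set Ordinal.{u})} (hX : IsStickFam X)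
    (hc : #X = aleph 1) : stick.{v} = aleph 1 := by
  set Y : Set (Set Ordinal.{v}) := (fun s => obal.{u, v} '' s) '' X with hYdef
  have hYfam : IsStickFam Y := by
    constructor
    · rintro t ⟨s, hs, rfl⟩
      obtain ⟨hs1, hs2⟩ := hX.1 s hs
      have hinj : Set.InjOn obal.{u, v} s := by
        intro a ha b hb hab
        rw [← obal_obal (hs1 ha), hab, obal_obal (hs1 hb)]
      constructor
      · rintro β ⟨α, hα, rfl⟩
        exact obal_lt (hs1 hα)
      · have hcnt : (obal.{u, v} '' s).Countable := by
          refine Set.Countable.image ?_ _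
          rw [Cardinal.countable_iff_lt_aleph_one, hs2]
          exact Cardinal.aleph0_lt_aleph_one
        have hinf : (obal.{u, v} '' s).Infinite := by
          rw [Set.infinite_image_iff hinj, ← Set.infinite_coe_iff, Cardinal.infinite_iff, hs2]
        haveI := hcnt.to_subtype
        haveI := hinf.to_subtype
        exact le_antisymm Cardinal.mk_le_aleph0 (Cardinal.aleph0_le_mk _)
    · intro y' hy1 hy2
      set y : Set Ordinal.{u} := obal.{v, u} '' y' with hydef
      have hysub : y ⊆ Iio ω₁ := by
        rintro α ⟨β, hβ, rfl⟩
        exact obal_lt (hy1 hβ)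
      have hinj' : Set.InjOn obal.{v, u} y' := by
        intro a ha b hb hab
        rw [← obal_obal (hy1 ha), hab, obal_obal (hy1 hb)]
      have hmk : #y = aleph 1 := by
        have e : ↥y' ≃ ↥y := Equiv.Set.imageOfInjOn _ _ hinj'
        have h2 := Cardinal.lift_mk_eq'.2 ⟨e⟩
        exact Cardinal.lift_injective (by rw [← h2, hy2, lift_aleph_one, lift_aleph_one])
      obtain ⟨s, hs, hss⟩ := hX.2 y hysub hmk
      refine ⟨obal.{u, v} '' s, ⟨s, hs, rfl⟩, ?_⟩
      rintro β ⟨α, hα, rfl⟩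
      obtain ⟨β', hβ', rfl⟩ := hss hα
      rwa [obal_obal (hy1 hβ')]
  have hYle : #Y ≤ aleph 1 := by
    have hsurj : Function.Surjective
        (fun s : X => (⟨obal.{u, v} '' (s : Set Ordinal.{u}), ⟨(s : Set Ordinal.{u}), s.2, rfl⟩⟩ : ↥Y)) := by
      rintro ⟨t, s, hs, rfl⟩
      exact ⟨⟨s, hs⟩, rfl⟩
    have h2 := Cardinal.lift_mk_le'.2 ⟨Function.Embedding.ofSurjective _ hsurj⟩
    rw [hc, lift_aleph_one] at h2
    rw [← Cardinal.lift_le.{u + 1}, lift_aleph_one]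
    exact h2
  have hmem : #Y ∈ {c | ∃ X : Set (Set Ordinal.{v}), IsStickFam X ∧ #X = c} :=
    ⟨Y, hYfam, rfl⟩
  unfold stick
  refine le_antisymm ((csInf_le' hmem).trans hYle) (le_csInf ⟨_, hmem⟩ ?_)
  rintro c ⟨Z, hZ, rfl⟩
  exact stickFam_lower hZ

theorem clubW_gives_stick_set (x : Ordinal → Set Ordinal) (hx : ClubWSeq x) :
    (IsStickFam {s | ∃ γ ∈ LimOmega1, ∃ u : Set Ordinal, u ⊆ Iio ω₁ ∧ u.Finite ∧ s = x γ \ u} ∧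
      #({s | ∃ γ ∈ LimOmega1, ∃ u : Set Ordinal, u ⊆ Iio ω₁ ∧ u.Finite ∧ s = x γ \ u} :
        Set (Set Ordinal)) = aleph 1) ∧
    stick = aleph 1 := by
  set X : Set (Set Ordinal) :=
    {s | ∃ γ ∈ LimOmega1, ∃ u : Set Ordinal, u ⊆ Iio ω₁ ∧ u.Finite ∧ s = x γ \ u} with hXdef
  -- X is a stick family
  have hfam : IsStickFam X := by
    constructor
    · rintro s ⟨γ, hγ, u, hu1, hu2, rfl⟩
      obtain ⟨hsub, _, hotp⟩ := hx.1 γ hγ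
      constructor
      · exact fun α hα => lt_trans (hsub hα.1) hγ.1
      · refine le_antisymm ?_ ?_
        · rw [← mk_of_hasOtpOmega hotp]
          exact Cardinal.mk_le_mk_of_subset Set.diff_subset
        · rw [Cardinal.aleph0_le_mk_iff, Set.infinite_coe_iff]
          exact (infinite_of_hasOtpOmega hotp).diff hu2
    · intro y hy1 hy2
      obtain ⟨γ, hγ, hfin⟩ := hx.2 y hy1 hy2
      obtain ⟨hsub, _, _⟩ := hx.1 γ hγ
      refine ⟨x γ \ (x γ \ y), ⟨γ, hγ, x γ \ y, ?_, hfin, rfl⟩, ?_⟩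
      · exact fun α hα => lt_trans (hsub hα.1) hγ.1
      · rintro α ⟨hα1, hα2⟩
        by_contra hαy
        exact hα2 ⟨hα1, hαy⟩
  -- X has cardinality at most ℵ₁
  have hIioInf : Infinite (Iio ω₁ : Set Ordinal) := by
    rw [Cardinal.infinite_iff, mk_Iio_omega1]
    exact Cardinal.aleph0_le_aleph 1
  have hupper : #X ≤ aleph 1 := by
    set f : (↥(Iio ω₁ : Set Ordinal)) × Finset (↥(Iio ω₁ : Set Ordinal)) → Set Ordinal :=
      fun p => x p.1 \ (Subtype.val '' (↑p.2 : Set (↥(Iio ω₁ : Set Ordinal))))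
    have hXr : X ⊆ Set.range f := by
      rintro s ⟨γ, hγ, u, hu1, hu2, rfl⟩
      have hu' : (Subtype.val ⁻¹' u : Set (↥(Iio ω₁ : Set Ordinal))).Finite :=
        hu2.preimage Subtype.val_injective.injOn
      refine ⟨⟨⟨γ, hγ.1⟩, hu'.toFinset⟩, ?_⟩
      simp only [f, Set.Finite.coe_toFinset, Subtype.image_preimage_coe]
      rw [Set.inter_eq_self_of_subset_right hu1]
    calc #X ≤ #(Set.range f) := Cardinal.mk_le_mk_of_subset hXr
      _ ≤ #((↥(Iio ω₁ : Set Ordinal)) × Finset (↥(Iio ω₁ : Set Ordinal))) := Cardinal.mk_range_le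
      _ = aleph 1 * aleph 1 := by
          rw [Cardinal.mk_prod, Cardinal.mk_finset_of_infinite, mk_Iio_omega1]
          simp
      _ = aleph 1 := Cardinal.mul_eq_self (Cardinal.aleph0_le_aleph 1)
  have hcard : #X = aleph 1 := le_antisymm hupper (stickFam_lower hfam)
  exact ⟨⟨hfam, hcard⟩, stick_eq_aleph_one_of hfam hcard⟩
end

section
/- (Miyamoto) For any set X and any family of cardinals (κ_i)_{i∈X}, the pseudo-product P = Π*_{i∈X}Fn(κ_i,2) (countable supports, i.e., κ = ℵ₁) satisfies Axiom A, witnessed by the relations ≤_0 = ≤ and ≤_n = ≤_h for every n ≥ 1; that is: (i) p ≤_{n+1} q implies p ≤_n q, and p ≤_0 q implies p ≤ q; (ii) every sequence (p_n)_{n∈ω} with p_{n+1} ≤_{n+1} p_n for all n has a q ∈ P with q ≤_n p_n for all n; (iii) for every p ∈ P, every n ∈ ω, and every maximal antichain A ⊆ P there is q ≤_n p such that only countably many elements of A are compatible with q. -/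
open Cardinal Set

/-- `Fn A`: finite partial functions from `A` to `2` (represented as `Bool`). -/
def Fn (A : Type*) : Type _ :=
  {p : A → Option Bool // {a | p a ≠ none}.Finite}

/-- `Fn A` ordered by reverse inclusion: `q ≤ p` iff `q` extends `p`. -/
instance Fn.instPartialOrder (A : Type*) : PartialOrder (Fn A) where
  le q p := ∀ a, p.1 a ≠ none → q.1 a = p.1 a
  le_refl p := fun _ _ => rfl
  le_trans r q p hrq hqp := fun a ha => by
    have h1 := hqp a ha
    have h2 := hrq a (h1 ▸ ha)
    rw [h2, h1]
  le_antisymm p q h h' := Subtype.ext <| funext fun a => by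
    by_cases hq : q.1 a = none
    · by_cases hp : p.1 a = none
      · rw [hp, hq]
      · exact (h' a hp).symm
    · exact h a hq

/-- The empty condition is the greatest element of `Fn A`. -/
instance Fn.instOrderTop (A : Type*) : OrderTop (Fn A) where
  top := ⟨fun _ => none, by simp⟩
  le_top p := fun a ha => absurd rfl ha

/-- The pseudo-product `Π*_{i∈X} P i` with countable supports. -/
def PseudoProd (P : X → Type*) [∀ i, PartialOrder (P i)] [∀ i, OrderTop (P i)] : Type _ :=
  {p : ∀ i, P i // #{i | p i ≠ ⊤} ≤ ℵ₀}

variable {X : Type} {P : X → Type} [∀ i, PartialOrder (P i)] [∀ i, OrderTop (P i)]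

/-- The pseudo-product ordering: `p ≤ q` iff `p` is pointwise `≤ q` and
`p(i) < q(i) < 1` holds for only finitely many `i`. -/
def PseudoProd.ple (p q : PseudoProd P) : Prop :=
  (∀ i, p.1 i ≤ q.1 i) ∧ {i | p.1 i < q.1 i ∧ q.1 i < ⊤}.Finite

/-- The horizontal relation: `p ≤_h q` iff `supp p ⊇ supp q` and `p` agrees with
`q` on `supp q`. -/
def PseudoProd.pleH (p q : PseudoProd P) : Prop :=
  {i | q.1 i ≠ ⊤} ⊆ {i | p.1 i ≠ ⊤} ∧ ∀ i, q.1 i ≠ ⊤ → p.1 i = q.1 i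

/-- The witnessing sequence of relations for Axiom A: `≤₀` is the pseudo-product
ordering and `≤ₙ` is `≤_h` for `n ≥ 1`. -/
def PseudoProd.axSeq (n : ℕ) (p q : PseudoProd P) : Prop :=
  if n = 0 then p.ple q else p.pleH q

/-- `p` and `q` are compatible. -/
def PseudoProd.Compat (p q : PseudoProd P) : Prop :=
  ∃ r : PseudoProd P, r.ple p ∧ r.ple q

/-- `A` is a maximal antichain: pairwise incompatible and no proper superset of it
is pairwise incompatible. -/
def PseudoProd.MaxAntichain (A : Set (PseudoProd P)) : Prop :=
  (∀ p ∈ A, ∀ q ∈ A, p ≠ q → ¬p.Compat q) ∧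
    ∀ B : Set (PseudoProd P), A ⊆ B →
      (∀ p ∈ B, ∀ q ∈ B, p ≠ q → ¬PseudoProd.Compat p q) → B = A

/-! ### Auxiliary lemmas -/

section AxiomAAux

namespace Fn

variable {A : Type*}

theorem le_def'' {x y : Fn A} : x ≤ y ↔ ∀ a, y.1 a ≠ none → x.1 a = y.1 a := Iff.rfl

theorem top_val'' (a : A) : (⊤ : Fn A).1 a = none := rfl

theorem eq_top_iff'' {x : Fn A} : x = ⊤ ↔ ∀ a, x.1 a = none :=
  ⟨fun h a => by rw [h]; rfl, fun h => Subtype.ext (funext h)⟩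

theorem ne_top_iff'' {x : Fn A} : x ≠ ⊤ ↔ ∃ a, x.1 a ≠ none := by
  simp only [Ne, eq_top_iff'', not_forall]

theorem le_some {x y : Fn A} (h : x ≤ y) {a : A} {b : Bool} (hy : y.1 a = some b) :
    x.1 a = some b := by
  have h2 := h a (by rw [hy]; exact Option.some_ne_none b)
  rw [h2, hy]

theorem exists_val_ne_of_ne {x y : Fn A} (h : x ≠ y) : ∃ a, x.1 a ≠ y.1 a := by
  by_contra hc
  push_neg at hc
  exact h (Subtype.ext (funext hc))

end Fn

namespace PseudoProd

theorem ple_refl (p : PseudoProd P) : p.ple p := by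
  refine ⟨fun i => le_refl _, ?_⟩
  have : {i | p.1 i < p.1 i ∧ p.1 i < ⊤} = ∅ := by
    ext i; simp [lt_irrefl]
  rw [this]; exact finite_empty

theorem ple_trans {p q r : PseudoProd P} (h1 : p.ple q) (h2 : q.ple r) : p.ple r := by
  refine ⟨fun i => (h1.1 i).trans (h2.1 i), ?_⟩
  apply (h1.2.union h2.2).subset
  rintro i ⟨hpr, hrt⟩
  by_cases hq : p.1 i < q.1 i
  · exact Or.inl ⟨hq, lt_of_le_of_lt (h2.1 i) hrt⟩
  · have heq : p.1 i = q.1 i := ((h1.1 i).lt_or_eq).resolve_left hq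
    exact Or.inr ⟨heq ▸ hpr, hrt⟩

theorem pleH_refl (p : PseudoProd P) : p.pleH p := ⟨fun _ h => h, fun _ _ => rfl⟩

theorem pleH_trans {p q r : PseudoProd P} (h1 : p.pleH q) (h2 : q.pleH r) : p.pleH r := by
  refine ⟨fun i hi => h1.1 (h2.1 hi), fun i hi => ?_⟩
  rw [h1.2 i (h2.1 hi), h2.2 i hi]

theorem pleH_ple {p q : PseudoProd P} (h : p.pleH q) : p.ple q := by
  refine ⟨fun i => ?_, ?_⟩
  · by_cases hq : q.1 i = ⊤
    · rw [hq]; exact le_top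
    · exact (h.2 i hq).le
  · have : {i | p.1 i < q.1 i ∧ q.1 i < ⊤} = ∅ := by
      ext i
      simp only [mem_setOf_eq, mem_empty_iff_false, iff_false, not_and]
      intro hlt htop
      exact absurd (h.2 i htop.ne) hlt.ne
    rw [this]; exact finite_empty

theorem pleH_of_chain (f : ℕ → PseudoProd P) (hf : ∀ k, (f (k + 1)).pleH (f k)) :
    ∀ {m k}, m ≤ k → (f k).pleH (f m) := by
  intro m k h
  induction h with
  | refl => exact pleH_refl _
  | step _ ih => exact pleH_trans (hf _) ih

theorem MaxAntichain.exists_compat {A : Set (PseudoProd P)} (hA : MaxAntichain A)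
    (r : PseudoProd P) : ∃ a s : PseudoProd P, a ∈ A ∧ s.ple a ∧ s.ple r := by
  by_cases hr : ∃ a ∈ A, a.Compat r
  · obtain ⟨a, ha, s, h1, h2⟩ := hr
    exact ⟨a, s, ha, h1, h2⟩
  push_neg at hr
  have hrA : r ∉ A := fun h => hr r h ⟨r, ple_refl r, ple_refl r⟩
  have hins : insert r A = A := by
    apply hA.2 (insert r A) (subset_insert _ _)
    intro p hp q hq hne
    rcases hp with rfl | hp
    · rcases hq with rfl | hq
      · exact absurd rfl hne
      · intro hc
        obtain ⟨s, h1, h2⟩ := hc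
        exact hr q hq ⟨s, h2, h1⟩
    · rcases hq with rfl | hq
      · exact hr p hp
      · exact hA.1 p hp q hq hne
  exact absurd (hins ▸ mem_insert r A) hrA

theorem diff_finite {a q w : PseudoProd P} (h1 : w.ple a) (h2 : w.ple q) :
    {i | a.1 i ≠ ⊤ ∧ q.1 i ≠ ⊤ ∧ a.1 i ≠ q.1 i}.Finite := by
  apply (h1.2.union h2.2).subset
  rintro i ⟨ha, hq, hne⟩
  by_cases h : w.1 i = a.1 i
  · refine Or.inr ⟨lt_of_le_of_ne (h2.1 i) ?_, lt_top_iff_ne_top.mpr hq⟩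
    intro e
    exact hne (h.symm.trans e)
  · exact Or.inl ⟨lt_of_le_of_ne (h1.1 i) h, lt_top_iff_ne_top.mpr ha⟩

theorem exists_fusion (f : ℕ → PseudoProd P) (hf : ∀ k, (f (k + 1)).pleH (f k)) :
    ∃ q : PseudoProd P, (∀ n, q.pleH (f n)) ∧
      {i | q.1 i ≠ ⊤} = ⋃ n, {i | (f n).1 i ≠ ⊤} := by
  classical
  have stab : ∀ i n m, n ≤ m → (f n).1 i ≠ ⊤ → (f m).1 i = (f n).1 i := fun i n m h hn =>
    (pleH_of_chain f hf h).2 i hn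
  set g : ∀ i, P i := fun i =>
    if h : ∃ n, (f n).1 i ≠ ⊤ then (f h.choose).1 i else ⊤ with hg
  have hgval : ∀ i n, (f n).1 i ≠ ⊤ → g i = (f n).1 i := by
    intro i n hn
    have h : ∃ n, (f n).1 i ≠ ⊤ := ⟨n, hn⟩
    have hc := h.choose_spec
    have e1 := stab i h.choose (max h.choose n) (le_max_left _ _) hc
    have e2 := stab i n (max h.choose n) (le_max_right _ _) hn
    rw [hg]
    simp only [dif_pos h]
    rw [← e1]
    exact e2
  have hgsupp : {i | g i ≠ ⊤} = ⋃ n, {i | (f n).1 i ≠ ⊤} := by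
    ext i
    simp only [mem_setOf_eq, mem_iUnion]
    constructor
    · intro hgi
      by_contra hno
      push_neg at hno
      have hne : ¬∃ n, (f n).1 i ≠ ⊤ := by
        rintro ⟨n, hn⟩; exact hn (hno n)
      rw [hg] at hgi
      simp only [dif_neg hne] at hgi
      exact hgi rfl
    · rintro ⟨n, hn⟩
      rw [hgval i n hn]
      exact hn
  refine ⟨⟨g, ?_⟩, fun n => ⟨fun i hi => ?_, fun i hn => hgval i n hn⟩, hgsupp⟩
  · rw [hgsupp]
    apply le_aleph0_iff_set_countable.mpr
    exact countable_iUnion fun n => le_aleph0_iff_set_countable.mp (f n).2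
  · show g i ≠ ⊤
    rw [hgval i n hi]
    exact hi

end PseudoProd

section FnPseudo

variable {T : X → Type}

/-- The set of "points" mentioned by a condition in the pseudo-product of `Fn`'s. -/
def ptsOf (s : PseudoProd (fun i : X => Fn (T i))) : Set (Σ i : X, T i) :=
  {z | (s.1 z.1).1 z.2 ≠ none}

theorem ptsOf_countable (s : PseudoProd (fun i : X => Fn (T i))) : (ptsOf s).Countable := by
  have hsupp : {i | s.1 i ≠ ⊤}.Countable := Cardinal.le_aleph0_iff_set_countable.mp s.2
  have := hsupp.to_subtype
  apply Set.Countable.mono ?_ (countable_iUnion fun i : {i | s.1 i ≠ ⊤} =>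
    ((s.1 i.1).2.image (Sigma.mk i.1)).countable)
  rintro ⟨i, t⟩ hz
  simp only [mem_iUnion]
  have hi : s.1 i ≠ ⊤ := Fn.ne_top_iff''.mpr ⟨t, hz⟩
  exact ⟨⟨i, hi⟩, Set.mem_image_of_mem _ hz⟩

/-- Merge two conditions, giving priority to the first one. -/
noncomputable def pmerge (x y : PseudoProd (fun i : X => Fn (T i))) :
    PseudoProd (fun i : X => Fn (T i)) := by
  refine ⟨fun i => ⟨fun t => Option.casesOn ((x.1 i).1 t) ((y.1 i).1 t) some, ?_⟩, ?_⟩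
  · apply ((x.1 i).2.union (y.1 i).2).subset
    intro t ht
    simp only [Set.mem_setOf_eq] at ht
    by_cases hx : (x.1 i).1 t = none
    · refine Or.inr ?_
      rw [hx] at ht
      exact ht
    · exact Or.inl hx
  · apply le_aleph0_iff_set_countable.mpr
    apply Set.Countable.mono ?_
      ((le_aleph0_iff_set_countable.mp x.2).union (le_aleph0_iff_set_countable.mp y.2))
    intro i hi
    simp only [Set.mem_setOf_eq] at hi
    obtain ⟨t, ht⟩ := Fn.ne_top_iff''.mp hi
    simp only [Set.mem_setOf_eq] at ht
    by_cases hx : (x.1 i).1 t = none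
    · refine Or.inr (Fn.ne_top_iff''.mpr ⟨t, ?_⟩)
      rw [hx] at ht
      exact ht
    · exact Or.inl (Fn.ne_top_iff''.mpr ⟨t, hx⟩)

theorem pmerge_val_some_left (x y : PseudoProd (fun i : X => Fn (T i))) {i : X} {t : T i}
    {b : Bool} (h : (x.1 i).1 t = some b) : ((pmerge x y).1 i).1 t = some b := by
  show Option.casesOn ((x.1 i).1 t) ((y.1 i).1 t) some = some b
  rw [h]

theorem pmerge_val_none_left (x y : PseudoProd (fun i : X => Fn (T i))) {i : X} {t : T i}
    (h : (x.1 i).1 t = none) : ((pmerge x y).1 i).1 t = (y.1 i).1 t := by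
  show Option.casesOn ((x.1 i).1 t) ((y.1 i).1 t) some = (y.1 i).1 t
  rw [h]

/-- Absorb the fresh coordinates of `s` into `Q`. -/
noncomputable def pabsorb (Q s : PseudoProd (fun i : X => Fn (T i))) :
    PseudoProd (fun i : X => Fn (T i)) := by
  classical
  refine ⟨fun i => if Q.1 i = ⊤ then s.1 i else Q.1 i, ?_⟩
  apply le_aleph0_iff_set_countable.mpr
  apply Set.Countable.mono ?_
    ((le_aleph0_iff_set_countable.mp Q.2).union (le_aleph0_iff_set_countable.mp s.2))
  intro i hi
  by_cases hq : Q.1 i = ⊤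
  · refine Or.inr ?_
    simp only [mem_setOf_eq, if_pos hq] at hi
    exact hi
  · exact Or.inl hq

theorem pabsorb_val_ne (Q s : PseudoProd (fun i : X => Fn (T i))) {i : X}
    (h : Q.1 i ≠ ⊤) : (pabsorb Q s).1 i = Q.1 i := by
  classical
  show (if Q.1 i = ⊤ then s.1 i else Q.1 i) = Q.1 i
  rw [if_neg h]

theorem pabsorb_val_top (Q s : PseudoProd (fun i : X => Fn (T i))) {i : X}
    (h : Q.1 i = ⊤) : (pabsorb Q s).1 i = s.1 i := by
  classical
  show (if Q.1 i = ⊤ then s.1 i else Q.1 i) = s.1 i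
  rw [if_pos h]

theorem pabsorb_pleH (Q s : PseudoProd (fun i : X => Fn (T i))) :
    (pabsorb Q s).pleH Q := by
  refine ⟨fun i hi => ?_, fun i hi => pabsorb_val_ne Q s hi⟩
  show (pabsorb Q s).1 i ≠ ⊤
  rw [pabsorb_val_ne Q s hi]
  exact hi

theorem pair_mk_injective {i : X} {b : Bool} :
    Function.Injective (fun t : T i => ((⟨i, t⟩ : Σ i : X, T i), b)) :=
  fun _ _ hab => sigma_mk_injective (congrArg Prod.fst hab)

/-- Turn a finite graph into a condition. -/
noncomputable def toCond (G : Set ((Σ i : X, T i) × Bool)) (hG : G.Finite) :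
    PseudoProd (fun i : X => Fn (T i)) := by
  classical
  refine ⟨fun i => ⟨fun t =>
    if (⟨⟨i, t⟩, true⟩ : (Σ i : X, T i) × Bool) ∈ G then some true
    else if (⟨⟨i, t⟩, false⟩ : (Σ i : X, T i) × Bool) ∈ G then some false else none, ?_⟩, ?_⟩
  · apply Set.Finite.subset
      ((hG.preimage (pair_mk_injective (b := true)).injOn).union
        (hG.preimage (pair_mk_injective (b := false)).injOn))
    intro t ht
    simp only [Set.mem_setOf_eq] at ht
    by_cases m1 : (⟨⟨i, t⟩, true⟩ : (Σ i : X, T i) × Bool) ∈ G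
    · exact Or.inl m1
    by_cases m2 : (⟨⟨i, t⟩, false⟩ : (Σ i : X, T i) × Bool) ∈ G
    · exact Or.inr m2
    exact absurd (by rw [if_neg m1, if_neg m2]) ht
  · apply le_aleph0_iff_set_countable.mpr
    apply Set.Countable.mono ?_ ((hG.image fun z => z.1.1).countable)
    intro i hi
    simp only [Set.mem_setOf_eq] at hi
    obtain ⟨t, ht⟩ := Fn.ne_top_iff''.mp hi
    simp only [Set.mem_setOf_eq] at ht
    by_cases m1 : (⟨⟨i, t⟩, true⟩ : (Σ i : X, T i) × Bool) ∈ G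
    · exact ⟨⟨⟨i, t⟩, true⟩, m1, rfl⟩
    by_cases m2 : (⟨⟨i, t⟩, false⟩ : (Σ i : X, T i) × Bool) ∈ G
    · exact ⟨⟨⟨i, t⟩, false⟩, m2, rfl⟩
    exact absurd (by rw [if_neg m1, if_neg m2]) ht

theorem toCond_val_mem {G : Set ((Σ i : X, T i) × Bool)} {hG : G.Finite} {i : X} {t : T i}
    {b : Bool} (h : ((toCond G hG).1 i).1 t = some b) :
    (⟨⟨i, t⟩, b⟩ : (Σ i : X, T i) × Bool) ∈ G := by
  classical
  have h' : (if (⟨⟨i, t⟩, true⟩ : (Σ i : X, T i) × Bool) ∈ G then some true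
      else if (⟨⟨i, t⟩, false⟩ : (Σ i : X, T i) × Bool) ∈ G then some false else none) =
      some b := h
  split_ifs at h' with h1 h2
  · obtain rfl : true = b := Option.some.inj h'
    exact h1
  · obtain rfl : false = b := Option.some.inj h'
    exact h2

theorem toCond_val_some {G : Set ((Σ i : X, T i) × Bool)} {hG : G.Finite} {i : X} {t : T i}
    {b : Bool} (hmem : (⟨⟨i, t⟩, b⟩ : (Σ i : X, T i) × Bool) ∈ G)
    (huniq : ∀ b', (⟨⟨i, t⟩, b'⟩ : (Σ i : X, T i) × Bool) ∈ G → b' = b) :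
    ((toCond G hG).1 i).1 t = some b := by
  classical
  show (if (⟨⟨i, t⟩, true⟩ : (Σ i : X, T i) × Bool) ∈ G then some true
      else if (⟨⟨i, t⟩, false⟩ : (Σ i : X, T i) × Bool) ∈ G then some false else none) = some b
  split_ifs with h1 h2
  · exact congrArg some (huniq true h1)
  · exact congrArg some (huniq false h2)
  · cases b
    · exact absurd hmem h2
    · exact absurd hmem h1

theorem toCond_congr {G₁ G₂ : Set ((Σ i : X, T i) × Bool)} (h : G₁ = G₂) (h₁ : G₁.Finite)
    (h₂ : G₂.Finite) : toCond G₁ h₁ = toCond G₂ h₂ := by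
  subst h; rfl

/-- The countable set of tasks associated to a countable set of points. -/
def taskSet (Z : Set (Σ i : X, T i)) : Set (Set ((Σ i : X, T i) × Bool)) :=
  {G | G.Finite ∧ G ⊆ Z ×ˢ (univ : Set Bool)}

theorem taskSet_countable {Z : Set (Σ i : X, T i)} (hZ : Z.Countable) :
    (taskSet Z).Countable :=
  Set.countable_setOf_finite_subset (hZ.prod countable_univ)

noncomputable def taskOf {Z : Set (Σ i : X, T i)} (hZ : Z.Countable) (j : ℕ) :
    Set ((Σ i : X, T i) × Bool) := by
  classical
  exact if Set.enumerateCountable (taskSet_countable hZ) ∅ j ∈ taskSet Z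
    then Set.enumerateCountable (taskSet_countable hZ) ∅ j else ∅

theorem taskOf_mem {Z : Set (Σ i : X, T i)} (hZ : Z.Countable) (j : ℕ) :
    taskOf hZ j ∈ taskSet Z := by
  classical
  unfold taskOf
  split_ifs with h
  · exact h
  · exact ⟨finite_empty, empty_subset _⟩

theorem taskOf_surj {Z : Set (Σ i : X, T i)} (hZ : Z.Countable)
    {G : Set ((Σ i : X, T i) × Bool)} (hG : G ∈ taskSet Z) : ∃ j, taskOf hZ j = G := by
  classical
  obtain ⟨j, hj⟩ := Set.subset_range_enumerate (taskSet_countable hZ) ∅ hG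
  refine ⟨j, ?_⟩
  unfold taskOf
  split_ifs with h
  · exact hj
  · exact absurd (by rw [hj]; exact hG) h

end FnPseudo

/-- The state of the recursive construction. -/
structure AState (X : Type) (T : X → Type) where
  Q : PseudoProd (fun i : X => Fn (T i))
  Z : Set (Σ i : X, T i)
  hZ : Z.Countable
  a : PseudoProd (fun i : X => Fn (T i))
  s : PseudoProd (fun i : X => Fn (T i))

theorem finite_subset_iUnion_mono {α : Type*} {s : Set α} (hs : s.Finite) {f : ℕ → Set α}
    (hmono : ∀ {m n : ℕ}, m ≤ n → f m ⊆ f n) (h : s ⊆ ⋃ n, f n) : ∃ n, s ⊆ f n := by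
  classical
  have hx : ∀ x : s, ∃ n, (x : α) ∈ f n := by
    rintro ⟨x, hxs⟩
    simpa using h hxs
  choose g hg using hx
  have := hs.to_subtype
  obtain ⟨N, hN⟩ := (Set.finite_range g).bddAbove
  refine ⟨N, fun x hxs => ?_⟩
  exact hmono (hN (mem_range_self ⟨x, hxs⟩)) (hg ⟨x, hxs⟩)

section MainLemma

variable {T : X → Type}

theorem PseudoProd.exists_pleH_seal (p : PseudoProd (fun i : X => Fn (T i)))
    (A : Set (PseudoProd (fun i : X => Fn (T i)))) (hA : PseudoProd.MaxAntichain A) :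
    ∃ q : PseudoProd (fun i : X => Fn (T i)),
      q.pleH p ∧ {r ∈ A | r.Compat q}.Countable := by
  classical
  choose pickA pickS hpick1 hpick2 hpick3 using hA.exists_compat
  -- the step function of the recursion
  obtain ⟨step, hstep⟩ :
      ∃ step : AState X T → AState X T → ℕ → AState X T,
        ∀ sm sk j,
          (step sm sk j).Q = pabsorb sk.Q
            (pickS (pmerge (toCond (taskOf sm.hZ j) (taskOf_mem sm.hZ j).1) sk.Q)) ∧
          (step sm sk j).Z = sk.Z ∪
            ptsOf (pickS (pmerge (toCond (taskOf sm.hZ j) (taskOf_mem sm.hZ j).1) sk.Q)) ∧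
          (step sm sk j).a =
            pickA (pmerge (toCond (taskOf sm.hZ j) (taskOf_mem sm.hZ j).1) sk.Q) ∧
          (step sm sk j).s =
            pickS (pmerge (toCond (taskOf sm.hZ j) (taskOf_mem sm.hZ j).1) sk.Q) :=
    ⟨fun sm sk j =>
      { Q := pabsorb sk.Q
          (pickS (pmerge (toCond (taskOf sm.hZ j) (taskOf_mem sm.hZ j).1) sk.Q))
        Z := sk.Z ∪
          ptsOf (pickS (pmerge (toCond (taskOf sm.hZ j) (taskOf_mem sm.hZ j).1) sk.Q))
        hZ := sk.hZ.union (ptsOf_countable _)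
        a := pickA (pmerge (toCond (taskOf sm.hZ j) (taskOf_mem sm.hZ j).1) sk.Q)
        s := pickS (pmerge (toCond (taskOf sm.hZ j) (taskOf_mem sm.hZ j).1) sk.Q) },
      fun _ _ _ => ⟨rfl, rfl, rfl, rfl⟩⟩
  -- the recursion with history
  obtain ⟨H, hH0, hHs⟩ :
      ∃ H : ℕ → ℕ → AState X T,
        H 0 = (fun _ => AState.mk p ∅ countable_empty p p) ∧
        ∀ k, H (k + 1) = fun m =>
          if m ≤ k then H k m else step (H k (Nat.unpair k).1) (H k k) (Nat.unpair k).2 :=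
    ⟨fun k => Nat.rec (fun _ => AState.mk p ∅ countable_empty p p)
      (fun k ih m => if m ≤ k then ih m else step (ih (Nat.unpair k).1) (ih k) (Nat.unpair k).2)
      k, rfl, fun _ => rfl⟩
  set σ : ℕ → AState X T := fun k => H k k with hσ
  have hstab : ∀ k m, m ≤ k → H k m = σ m := by
    intro k
    induction k with
    | zero =>
      intro m hm
      obtain rfl := Nat.le_zero.mp hm
      rfl
    | succ k ih =>
      intro m hm
      rw [hHs]
      by_cases h : m ≤ k
      · simp only [if_pos h]
        exact ih m h
      · obtain rfl : m = k + 1 := le_antisymm hm (Nat.succ_le_of_lt (not_le.mp h))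
        simp only [if_neg h]
        show _ = H (k + 1) (k + 1)
        rw [hHs]
        simp only [if_neg h]
  have hσstep : ∀ k, σ (k + 1) = step (σ (Nat.unpair k).1) (σ k) (Nat.unpair k).2 := by
    intro k
    show H (k + 1) (k + 1) = _
    rw [hHs]
    simp only [if_neg (Nat.not_succ_le_self k)]
    rw [hstab k _ (Nat.unpair_left_le k)]
  have hσ0 : σ 0 = AState.mk p ∅ countable_empty p p := by
    show H 0 0 = _
    rw [hH0]
  -- basic structure
  have hchainstep : ∀ k, ((σ (k + 1)).Q).pleH ((σ k).Q) := by
    intro k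
    rw [hσstep k, (hstep _ _ _).1]
    exact pabsorb_pleH _ _
  have hchain : ∀ {m k : ℕ}, m ≤ k → ((σ k).Q).pleH ((σ m).Q) :=
    fun h => PseudoProd.pleH_of_chain _ hchainstep h
  have hZstep : ∀ k, (σ k).Z ⊆ (σ (k + 1)).Z := by
    intro k
    rw [hσstep k, (hstep _ _ _).2.1]
    exact subset_union_left
  have hZmono : ∀ {m k : ℕ}, m ≤ k → (σ m).Z ⊆ (σ k).Z := by
    intro m k h
    induction h with
    | refl => exact subset_rfl
    | step _ ih => exact ih.trans (hZstep _)
  obtain ⟨q, hq1, hq2⟩ := PseudoProd.exists_fusion (fun k => (σ k).Q) hchainstep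
  refine ⟨q, ?_, ?_⟩
  · have h0 := hq1 0
    rw [hσ0] at h0
    exact h0
  apply Set.Countable.mono ?_ (countable_range fun k => (σ (k + 1)).a)
  rintro a ⟨haA, w, hw1, hw2⟩
  -- the disagreement set of a and q
  set F : Set X := {i | a.1 i ≠ ⊤ ∧ q.1 i ≠ ⊤ ∧ a.1 i ≠ q.1 i} with hFdef
  have hF : F.Finite := PseudoProd.diff_finite hw1 hw2
  set Zinf : Set (Σ i : X, T i) := ⋃ k, (σ k).Z with hZinf
  set Ga : Set ((Σ i : X, T i) × Bool) :=
    {z | z.1.1 ∈ F ∧ z.1 ∈ Zinf ∧ (a.1 z.1.1).1 z.1.2 = some z.2} with hGadef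
  have hGaFin : Ga.Finite := by
    have hFt := hF.to_subtype
    apply Set.Finite.subset (Set.finite_iUnion fun i : F =>
      (((a.1 i.1).2.prod (Set.finite_univ : (univ : Set Bool).Finite)).image
        fun tb : T i.1 × Bool => ((⟨i.1, tb.1⟩ : Σ i : X, T i), tb.2)))
    rintro ⟨⟨i, t⟩, b⟩ ⟨hiF, hZm, hval⟩
    simp only [mem_iUnion]
    refine ⟨⟨i, hiF⟩, (t, b), ⟨?_, mem_univ _⟩, rfl⟩
    simp only [Set.mem_setOf_eq, hval]
    exact Option.some_ne_none b
  -- find the stage m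
  have hFsub : F ⊆ ⋃ k, {i | ((σ k).Q).1 i ≠ ⊤} := by
    intro i hi
    have h1 : i ∈ {i | q.1 i ≠ ⊤} := hi.2.1
    rw [hq2] at h1
    exact h1
  obtain ⟨m₁, hm₁⟩ := finite_subset_iUnion_mono hF (fun h => (hchain h).1) hFsub
  have hGaZ : Prod.fst '' Ga ⊆ ⋃ k, (σ k).Z := by
    rintro z ⟨zb, hzb, rfl⟩
    exact hzb.2.1
  obtain ⟨m₂, hm₂⟩ := finite_subset_iUnion_mono (hGaFin.image _) (fun h => hZmono h) hGaZ
  set m : ℕ := max m₁ m₂ with hm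
  have hFm : F ⊆ {i | ((σ m).Q).1 i ≠ ⊤} := hm₁.trans (hchain (le_max_left _ _)).1
  have hGam : Ga ∈ taskSet (σ m).Z := by
    refine ⟨hGaFin, fun z hz => ?_⟩
    exact ⟨hZmono (le_max_right m₁ m₂) (hm₂ (mem_image_of_mem _ hz)), mem_univ _⟩
  obtain ⟨j, hj⟩ := taskOf_surj (σ m).hZ hGam
  set k : ℕ := Nat.pair m j with hk
  have hunp : Nat.unpair k = (m, j) := Nat.unpair_pair m j
  have hmk : m ≤ k := Nat.left_le_pair m j
  have hσk1 : σ (k + 1) = step (σ m) (σ k) j := by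
    rw [hσstep k, hunp]
  -- names for the step data
  have hecast : toCond (taskOf (σ m).hZ j) (taskOf_mem (σ m).hZ j).1 = toCond Ga hGaFin :=
    toCond_congr hj _ _
  set e : PseudoProd (fun i : X => Fn (T i)) := toCond Ga hGaFin with hedef
  set r : PseudoProd (fun i : X => Fn (T i)) := pmerge e ((σ k).Q) with hrdef
  have hstepk := hstep (σ m) (σ k) j
  rw [hecast] at hstepk
  have hQ1 : (σ (k + 1)).Q = pabsorb ((σ k).Q) (pickS r) := by
    rw [hσk1]; exact hstepk.1
  have hZ1 : (σ (k + 1)).Z = (σ k).Z ∪ ptsOf (pickS r) := by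
    rw [hσk1]; exact hstepk.2.1
  have ha1 : (σ (k + 1)).a = pickA r := by
    rw [hσk1]; exact hstepk.2.2.1
  have hs'r : (pickS r).ple r := hpick3 r
  have hs'a' : (pickS r).ple (pickA r) := hpick2 r
  have ha'A : pickA r ∈ A := hpick1 r
  -- the e-value characterization
  have heval : ∀ (i : X) (t : T i) (b : Bool), (e.1 i).1 t = some b ↔
      (i ∈ F ∧ (⟨i, t⟩ : Σ i : X, T i) ∈ Zinf ∧ (a.1 i).1 t = some b) := by
    intro i t b
    constructor
    · intro h
      exact toCond_val_mem h
    · rintro ⟨h1, h2, h3⟩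
      refine toCond_val_some ?_ ?_
      · show i ∈ F ∧ (⟨i, t⟩ : Σ i : X, T i) ∈ Zinf ∧ (a.1 i).1 t = some b
        exact ⟨h1, h2, h3⟩
      · rintro b' ⟨_, _, h3'⟩
        exact Option.some.inj (h3'.symm.trans h3)
  -- pointwise compatibility of a and q
  have hptc : ∀ (i : X) (t : T i) (b b' : Bool),
      (a.1 i).1 t = some b → (q.1 i).1 t = some b' → b = b' := by
    intro i t b b' h1 h2
    have e1 := Fn.le_some (hw1.1 i) h1
    have e2 := Fn.le_some (hw2.1 i) h2
    exact Option.some.inj (e1.symm.trans e2)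
  -- r is a ple-extension of (σ k).Q
  have hrQk : r.ple ((σ k).Q) := by
    constructor
    · intro i t ht
      cases hev : (e.1 i).1 t with
      | none =>
        rw [hrdef]
        exact pmerge_val_none_left _ _ hev
      | some b =>
        obtain ⟨hiF, hiZ, hav⟩ := (heval i t b).mp hev
        have hsuppk : ((σ k).Q).1 i ≠ ⊤ := (hchain hmk).1 (hFm hiF)
        have hqQk : q.1 i = ((σ k).Q).1 i := (hq1 k).2 i hsuppk
        cases hQv : (((σ k).Q).1 i).1 t with
        | none => exact absurd hQv ht
        | some c =>
          have hqv : (q.1 i).1 t = some c := by rw [hqQk]; exact hQv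
          obtain rfl : b = c := hptc i t b c hav hqv
          rw [hrdef]
          rw [pmerge_val_some_left _ _ hev]
    · apply hF.subset
      rintro i ⟨hlt, _⟩
      by_contra hiF
      apply hlt.ne
      apply Subtype.ext
      funext t
      cases hev : (e.1 i).1 t with
      | none =>
        rw [hrdef]
        exact pmerge_val_none_left _ _ hev
      | some b => exact absurd ((heval i t b).mp hev).1 hiF
  have hs'Qk : (pickS r).ple ((σ k).Q) := PseudoProd.ple_trans hs'r hrQk
  -- absorption
  have habs : ∀ i, ((σ k).Q).1 i = ⊤ → (pickS r).1 i ≠ ⊤ → q.1 i = (pickS r).1 i := by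
    intro i h1 h2
    have hv : (σ (k + 1)).Q.1 i = (pickS r).1 i := by
      rw [hQ1]; exact pabsorb_val_top _ _ h1
    have hne : (σ (k + 1)).Q.1 i ≠ ⊤ := by rw [hv]; exact h2
    rw [(hq1 (k + 1)).2 i hne, hv]
  have hsupps' : ∀ i, (pickS r).1 i ≠ ⊤ → q.1 i ≠ ⊤ := by
    intro i h
    by_cases hQ : ((σ k).Q).1 i = ⊤
    · rw [habs i hQ h]; exact h
    · rw [(hq1 k).2 i hQ]; exact hQ
  have hs'q : ∀ i, (pickS r).1 i ≠ ⊤ → (pickS r).1 i ≤ q.1 i := by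
    intro i h
    by_cases hQ : ((σ k).Q).1 i = ⊤
    · rw [habs i hQ h]
    · rw [(hq1 k).2 i hQ]
      exact hs'Qk.1 i
  have hpts : ptsOf (pickS r) ⊆ Zinf := by
    intro z hz
    rw [hZinf]
    apply mem_iUnion.mpr ⟨k + 1, ?_⟩
    rw [hZ1]
    exact Or.inr hz
  -- key pointwise fact: s' and a agree wherever both are defined
  have hkey : ∀ (i : X) (t : T i) (b b' : Bool),
      ((pickS r).1 i).1 t = some b' → (a.1 i).1 t = some b → b' = b := by
    intro i t b b' hs hav
    by_cases hiF : i ∈ F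
    · have hzZ : (⟨i, t⟩ : Σ i : X, T i) ∈ Zinf := hpts (by
        show ((pickS r).1 i).1 t ≠ none
        rw [hs]; exact Option.some_ne_none b')
      have hev : (e.1 i).1 t = some b := (heval i t b).mpr ⟨hiF, hzZ, hav⟩
      have hrv : (r.1 i).1 t = some b := by rw [hrdef]; exact pmerge_val_some_left _ _ hev
      have h5 : ((pickS r).1 i).1 t = some b := Fn.le_some (hs'r.1 i) hrv
      exact Option.some.inj (hs.symm.trans h5)
    · have hne : (pickS r).1 i ≠ ⊤ := Fn.ne_top_iff''.mpr ⟨t, by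
        rw [hs]; exact Option.some_ne_none b'⟩
      have haq : a.1 i = q.1 i := by
        by_contra hne2
        exact hiF ⟨Fn.ne_top_iff''.mpr ⟨t, by rw [hav]; exact Option.some_ne_none b⟩,
          hsupps' i hne, hne2⟩
      have h5 : ((pickS r).1 i).1 t = some b := Fn.le_some (hs'q i hne) (by
        rw [← haq]; exact hav)
      exact Option.some.inj (hs.symm.trans h5)
  -- the common extension of a and (pickA r)
  have hC1 : (pmerge (pickS r) a).ple a := by
    constructor
    · intro i t hat
      cases hb : (a.1 i).1 t with
      | none => exact absurd hb hat
      | some b =>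
        cases hsv : ((pickS r).1 i).1 t with
        | none =>
          rw [pmerge_val_none_left _ _ hsv]
          exact hb
        | some b' =>
          rw [pmerge_val_some_left _ _ hsv]
          exact congrArg some (hkey i t b b' hsv hb)
    · apply (hF.union hs'Qk.2).subset
      rintro i ⟨hlt, htop⟩
      by_cases hiF : i ∈ F
      · exact Or.inl hiF
      refine Or.inr ?_
      have hvne : ∃ t, ((pmerge (pickS r) a).1 i).1 t ≠ (a.1 i).1 t :=
        Fn.exists_val_ne_of_ne hlt.ne
      obtain ⟨t, ht⟩ := hvne
      cases hsv : ((pickS r).1 i).1 t with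
      | none => exact absurd (pmerge_val_none_left _ _ hsv) ht
      | some b =>
      have hav : (a.1 i).1 t = none := by
        cases hav : (a.1 i).1 t with
        | none => rfl
        | some c =>
          exact absurd (by
            rw [pmerge_val_some_left _ _ hsv, hkey i t c b hsv hav, hav]) ht
      have hstop : (pickS r).1 i ≠ ⊤ := Fn.ne_top_iff''.mpr ⟨t, by
        rw [hsv]; exact Option.some_ne_none b⟩
      have hqi : q.1 i ≠ ⊤ := hsupps' i hstop
      have haq : a.1 i = q.1 i := by
        by_contra h2
        exact hiF ⟨htop.ne, hqi, h2⟩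
      by_cases hQ : ((σ k).Q).1 i = ⊤
      · exfalso
        have h5 := habs i hQ hstop
        rw [haq, h5] at hav
        rw [hav] at hsv
        cases hsv
      · refine ⟨lt_of_le_of_ne (hs'Qk.1 i) ?_, lt_top_iff_ne_top.mpr hQ⟩
        intro heq
        have h3 : ((σ k).Q).1 i = q.1 i := ((hq1 k).2 i hQ).symm
        rw [heq, h3, ← haq] at hsv
        rw [hav] at hsv
        cases hsv
  have hC2 : (pmerge (pickS r) a).ple (pickA r) := by
    constructor
    · intro i t hat
      cases hb : ((pickA r).1 i).1 t with
      | none => exact absurd hb hat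
      | some b =>
        have hsb := Fn.le_some (hs'a'.1 i) hb
        rw [pmerge_val_some_left _ _ hsb]
    · apply (hs'a'.2.union hF).subset
      rintro i ⟨hlt, htop⟩
      by_cases hcase : (pickS r).1 i < (pickA r).1 i
      · exact Or.inl ⟨hcase, htop⟩
      have heq : (pickS r).1 i = (pickA r).1 i := ((hs'a'.1 i).lt_or_eq).resolve_left hcase
      refine Or.inr ?_
      have hvne : ∃ t, ((pmerge (pickS r) a).1 i).1 t ≠ ((pickA r).1 i).1 t :=
        Fn.exists_val_ne_of_ne hlt.ne
      obtain ⟨t, ht⟩ := hvne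
      cases hsv : ((pickS r).1 i).1 t with
      | some b =>
        refine absurd ?_ ht
        have hb : ((pickA r).1 i).1 t = some b := by rw [← heq]; exact hsv
        rw [pmerge_val_some_left _ _ hsv, hb]
      | none =>
      have hav : ∃ b, (a.1 i).1 t = some b := by
        cases hav : (a.1 i).1 t with
        | none =>
          refine absurd ?_ ht
          rw [pmerge_val_none_left _ _ hsv, hav, ← heq, hsv]
        | some b => exact ⟨b, rfl⟩
      obtain ⟨b, hav⟩ := hav
      by_contra hiF
      have hstop : (pickS r).1 i ≠ ⊤ := by
        rw [heq]
        exact lt_top_iff_ne_top.mp htop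
      have hqi : q.1 i ≠ ⊤ := hsupps' i hstop
      have haq : a.1 i = q.1 i := by
        by_contra h2
        exact hiF ⟨Fn.ne_top_iff''.mpr ⟨t, by rw [hav]; exact Option.some_ne_none b⟩, hqi, h2⟩
      by_cases hQ : ((σ k).Q).1 i = ⊤
      · have h5 := habs i hQ hstop
        have h6 : (a.1 i).1 t = ((pickS r).1 i).1 t := by rw [haq, h5]
        rw [hav, hsv] at h6
        cases h6
      · have h3 : ((σ k).Q).1 i = q.1 i := ((hq1 k).2 i hQ).symm
        have h6 : (pickS r).1 i ≤ a.1 i := by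
          rw [haq, ← h3]
          exact hs'Qk.1 i
        have h7 := Fn.le_some h6 hav
        rw [hsv] at h7
        cases h7
  -- conclude
  have hcompat : a.Compat (pickA r) := ⟨pmerge (pickS r) a, hC1, hC2⟩
  have haa' : a = pickA r := by
    by_contra hne
    exact hA.1 a haA (pickA r) ha'A hne hcompat
  refine ⟨k, ?_⟩
  show (σ (k + 1)).a = a
  rw [ha1]
  exact haa'.symm

end MainLemma

end AxiomAAux

theorem miyamoto_axiomA (X : Type) (κ : X → Cardinal) :
    (∀ (n : ℕ) (p q : PseudoProd (fun i : X => Fn (κ i).ord.ToType)),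
        PseudoProd.axSeq (n + 1) p q → PseudoProd.axSeq n p q) ∧
    (∀ p q : PseudoProd (fun i : X => Fn (κ i).ord.ToType),
        PseudoProd.axSeq 0 p q → p.ple q) ∧
    (∀ p : ℕ → PseudoProd (fun i : X => Fn (κ i).ord.ToType),
        (∀ n, PseudoProd.axSeq (n + 1) (p (n + 1)) (p n)) →
        ∃ q, ∀ n, PseudoProd.axSeq n q (p n)) ∧
    (∀ (p : PseudoProd (fun i : X => Fn (κ i).ord.ToType)) (n : ℕ)
        (A : Set (PseudoProd (fun i : X => Fn (κ i).ord.ToType))),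
        PseudoProd.MaxAntichain A →
        ∃ q, PseudoProd.axSeq n q p ∧ {r ∈ A | r.Compat q}.Countable) := by
  refine ⟨?_, ?_, ?_, ?_⟩
  · intro n p q h
    unfold PseudoProd.axSeq at h ⊢
    rw [if_neg (Nat.succ_ne_zero n)] at h
    by_cases hn : n = 0
    · rw [if_pos hn]
      exact PseudoProd.pleH_ple h
    · rw [if_neg hn]
      exact h
  · intro p q h
    unfold PseudoProd.axSeq at h
    rw [if_pos rfl] at h
    exact h
  · intro p hp
    have hp' : ∀ n, (p (n + 1)).pleH (p n) := by
      intro n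
      have h := hp n
      unfold PseudoProd.axSeq at h
      rw [if_neg (Nat.succ_ne_zero n)] at h
      exact h
    obtain ⟨q, hq, -⟩ := PseudoProd.exists_fusion p hp'
    refine ⟨q, fun n => ?_⟩
    unfold PseudoProd.axSeq
    by_cases hn : n = 0
    · rw [if_pos hn]
      exact PseudoProd.pleH_ple (hq n)
    · rw [if_neg hn]
      exact hq n
  · intro p n A hA
    obtain ⟨q, h1, h2⟩ := PseudoProd.exists_pleH_seal p A hA
    refine ⟨q, ?_, h2⟩
    unfold PseudoProd.axSeq
    by_cases hn : n = 0
    · rw [if_pos hn]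
      exact PseudoProd.pleH_ple h1
    · rw [if_neg hn]
      exact h1
end
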